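/- Let R be a nonsingular M-matrix with e'R ≥ 0', p a nonnegative probability vector, and α > 0. Then all eigenvalues of −R(I − pe') − α pe' have strictly negative real part. -/

import Mathlib

open Matrix Filter

attribute [local instance] Matrix.linftyOpNormedRing Matrix.linftyOpNormedAlgebra
  Matrix.linftyOpNormedAddCommGroup

private lemma amh_map_mul {K : ℕ} (A B : Matrix (Fin K) (Fin K) ℝ) :
    (A * B).map Complex.ofReal = A.map Complex.ofReal * B.map Complex.ofReal := by
  ext i j
  simp [Matrix.mul_apply, Matrix.map_apply]

private lemma amh_map_pow {K : ℕ} (A : Matrix (Fin K) (Fin K) ℝ) (n : ℕ) :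
    (A ^ n).map Complex.ofReal = (A.map Complex.ofReal) ^ n := by
  induction n with
  | zero =>
    simp only [pow_zero]
    ext i j
    simp [Matrix.map_apply, Matrix.one_apply, apply_ite Complex.ofReal]
  | succ n ih => rw [pow_succ, pow_succ, amh_map_mul, ih]

private lemma amh_decay {K : ℕ} (hK : K ≠ 0) (s : ℝ) (hs : 0 < s)
    (Nc : Matrix (Fin K) (Fin K) ℂ) (hρ : ∀ μ ∈ spectrum ℂ Nc, ‖μ‖ < s) :
    ∃ t : ℝ, 0 ≤ t ∧ t < s ∧ ∀ᶠ n in atTop, ‖Nc ^ n‖ ≤ t ^ n := by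
  haveI : NeZero K := ⟨hK⟩
  have hrad : spectralRadius ℂ Nc < ENNReal.ofReal s := by
    have := spectrum.spectralRadius_lt_of_forall_lt (a := Nc) (r := s.toNNReal)
      (fun z hz => by
        have := hρ z hz
        simpa [← NNReal.coe_lt_coe, Real.coe_toNNReal _ hs.le] using this)
    simpa [ENNReal.ofReal] using this
  obtain ⟨t', ht1, ht2⟩ := exists_between hrad
  have ht'top : t' ≠ ⊤ := ne_top_of_lt ht2
  set t : ℝ := t'.toReal with htdef
  have htnn : 0 ≤ t := ENNReal.toReal_nonneg
  have hts : t < s := by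
    have := (ENNReal.toReal_lt_toReal ht'top (by simp)).mpr ht2
    simpa [ENNReal.toReal_ofReal hs.le] using this
  refine ⟨t, htnn, hts, ?_⟩
  have hgel := spectrum.pow_nnnorm_pow_one_div_tendsto_nhds_spectralRadius Nc
  have hev : ∀ᶠ n : ℕ in atTop, ((‖Nc ^ n‖₊ : ENNReal) ^ (1 / (n:ℝ))) < t' :=
    hgel.eventually_lt_const ht1
  filter_upwards [hev, eventually_ge_atTop 1] with n hn hn1
  have hne : (n : ℝ) ≠ 0 := by positivity
  have h2 : ((‖Nc ^ n‖₊ : ENNReal) ^ (1 / (n:ℝ))) ^ (n : ℝ) ≤ t' ^ (n : ℝ) :=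
    ENNReal.rpow_le_rpow hn.le (by positivity)
  rw [← ENNReal.rpow_mul, one_div, inv_mul_cancel₀ hne, ENNReal.rpow_one] at h2
  have h3 : (‖Nc ^ n‖₊ : ENNReal) ≤ t' ^ (n : ℕ) := by
    rw [← ENNReal.rpow_natCast]; exact h2
  have h4 : ‖Nc ^ n‖ ≤ (t' ^ (n:ℕ)).toReal := by
    have := ENNReal.toReal_mono (by simp [ENNReal.pow_ne_top ht'top]) h3
    simpa using this
  rwa [ENNReal.toReal_pow, ← htdef] at h4

/-- Key analytic lemma: if `(z • 1 - N) y = p` with `Re z ≥ s` and `∑ y = 0`,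
we get a contradiction. -/
private lemma amh_key {K : ℕ} (hK : K ≠ 0) (N : Matrix (Fin K) (Fin K) ℝ) (s : ℝ)
    (hs : 0 < s) (hN : ∀ i j, 0 ≤ N i j) (hcol : ∀ j, ∑ i, N i j ≤ s)
    (p : Fin K → ℝ) (hp : ∀ i, 0 ≤ p i) (hp1 : ∑ i, p i = 1)
    (hρ : ∀ μ ∈ spectrum ℂ (N.map Complex.ofReal), ‖μ‖ < s)
    (z : ℂ) (hz : s ≤ z.re) (y : Fin K → ℂ)
    (hy : (z • (1 : Matrix (Fin K) (Fin K) ℂ) - N.map Complex.ofReal) *ᵥ y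
      = fun i => (p i : ℂ))
    (hsum : ∑ i, y i = 0) : False := by
  obtain ⟨t, ht0, hts, hdecay⟩ := amh_decay hK s hs (N.map Complex.ofReal) hρ
  set Nc : Matrix (Fin K) (Fin K) ℂ := N.map Complex.ofReal with hNc
  have hNcy : Nc *ᵥ y = z • y - fun i => (p i : ℂ) := by
    rw [sub_mulVec] at hy
    have h1 : (z • (1 : Matrix (Fin K) (Fin K) ℂ)) *ᵥ y = z • y := by
      rw [smul_mulVec, one_mulVec]
    rw [h1] at hy
    rw [← hy]; ring_nf
  have hNpow : ∀ n i j, 0 ≤ (N ^ n) i j := by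
    intro n
    induction n with
    | zero => intro i j; simp [Matrix.one_apply]; split <;> norm_num
    | succ n ih =>
      intro i j
      rw [pow_succ, Matrix.mul_apply]
      exact Finset.sum_nonneg fun l _ => mul_nonneg (ih i l) (hN l j)
  have hbrec : ∀ n j, ∑ i, (N ^ (n+1)) i j ≤ s * ∑ i, (N ^ n) i j := by
    intro n j
    have he : ∀ i, (N ^ (n+1)) i j = ∑ l, N i l * (N ^ n) l j := by
      intro i; rw [pow_succ']; rfl
    calc ∑ i, (N ^ (n+1)) i j = ∑ i, ∑ l, N i l * (N ^ n) l j := by simp_rw [he]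
      _ = ∑ l, ∑ i, N i l * (N ^ n) l j := Finset.sum_comm
      _ = ∑ l, (∑ i, N i l) * (N ^ n) l j := by simp_rw [Finset.sum_mul]
      _ ≤ ∑ l, s * (N ^ n) l j :=
          Finset.sum_le_sum fun l _ => mul_le_mul_of_nonneg_right (hcol l) (hNpow n l j)
      _ = s * ∑ l, (N ^ n) l j := by rw [Finset.mul_sum]
  set c : ℕ → ℝ := fun n => ∑ j, (∑ i, (N ^ n) i j) * p j with hc
  set X : ℕ → ℂ := fun n => ∑ i, (((N ^ n).map Complex.ofReal) *ᵥ y) i with hX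
  have hc0 : c 0 = 1 := by
    simp only [hc, pow_zero]
    have he : ∀ j : Fin K, (∑ i, (1 : Matrix (Fin K) (Fin K) ℝ) i j) = 1 := by
      intro j; simp [Matrix.one_apply]
    simp_rw [he, one_mul]; exact hp1
  have hcnn : ∀ n, 0 ≤ c n := fun n =>
    Finset.sum_nonneg fun j _ => mul_nonneg (Finset.sum_nonneg fun i _ => hNpow n i j) (hp j)
  have hcs : ∀ n, c (n+1) ≤ s * c n := by
    intro n
    rw [hc, Finset.mul_sum]
    refine Finset.sum_le_sum fun j _ => ?_
    rw [← mul_assoc]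
    exact mul_le_mul_of_nonneg_right (hbrec n j) (hp j)
  have hX0 : X 0 = 0 := by simp [hX, hsum]
  have hXrec : ∀ n, X (n+1) = z * X n - c n := by
    intro n
    have hmap : (N ^ (n+1)).map Complex.ofReal
        = ((N ^ n).map Complex.ofReal) * Nc := by
      rw [pow_succ, amh_map_mul]
    have h1 : ((N ^ (n+1)).map Complex.ofReal) *ᵥ y
        = ((N ^ n).map Complex.ofReal) *ᵥ (Nc *ᵥ y) := by
      rw [hmap, mulVec_mulVec]
    have h2 : ((N ^ n).map Complex.ofReal) *ᵥ (Nc *ᵥ y)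
        = z • (((N ^ n).map Complex.ofReal) *ᵥ y)
          - ((N ^ n).map Complex.ofReal) *ᵥ (fun i => (p i : ℂ)) := by
      rw [hNcy, mulVec_sub, mulVec_smul]
    have h3 : ∑ i, (((N ^ n).map Complex.ofReal) *ᵥ (fun j => (p j : ℂ))) i
        = (c n : ℂ) := by
      simp only [mulVec, dotProduct, Matrix.map_apply, hc]
      push_cast
      rw [Finset.sum_comm]
      congr 1; ext j; rw [Finset.sum_mul]
    simp only [hX, h1, h2, Pi.sub_apply, Pi.smul_apply, smul_eq_mul, Finset.sum_sub_distrib,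
      ← Finset.mul_sum, h3]
  have hX1 : X 1 = -1 := by
    rw [hXrec 0, hX0, hc0]; simp
  have hXbound : ∀ n, ‖X n‖ ≤ (K : ℝ) * (‖Nc ^ n‖ * ‖y‖) := by
    intro n
    rw [hX]
    simp only [amh_map_pow, ← hNc]
    calc ‖∑ i, ((Nc ^ n) *ᵥ y) i‖ ≤ ∑ i : Fin K, ‖((Nc ^ n) *ᵥ y) i‖ := norm_sum_le _ _
      _ ≤ ∑ i : Fin K, ‖(Nc ^ n) *ᵥ y‖ := Finset.sum_le_sum fun i _ => norm_le_pi_norm _ i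
      _ = (K : ℝ) * ‖(Nc ^ n) *ᵥ y‖ := by simp [mul_comm]
      _ ≤ (K : ℝ) * (‖Nc ^ n‖ * ‖y‖) :=
          mul_le_mul_of_nonneg_left (Matrix.linfty_opNorm_mulVec _ y) (by positivity)
  -- case split on ‖z‖
  have hzabs : s ≤ ‖z‖ := le_trans hz (Complex.re_le_norm z)
  rcases eq_or_lt_of_le hzabs with hzs | hzs
  · -- ‖z‖ = s, so z = s
    have hzre : z.re = s := le_antisymm (hzs ▸ Complex.re_le_norm z) hz
    have hzim : z.im = 0 := by
      have h1 : ‖z‖ ^ 2 = z.re ^ 2 + z.im ^ 2 := by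
        rw [Complex.sq_norm, Complex.normSq_apply]; ring
      have h2 : ‖z‖ = s := by rw [← hzs]
      have h3 : z.im ^ 2 = 0 := by rw [h2, hzre] at h1; linarith
      exact pow_eq_zero_iff (by norm_num) |>.mp h3
    have hzeq : z = (s : ℂ) := Complex.ext hzre (by simp [hzim])
    -- Re (X (n+1)) ≤ -s^n
    have hre : ∀ n, (X (n+1)).re ≤ -s ^ n := by
      intro n
      induction n with
      | zero => rw [hX1]; simp
      | succ n ih =>
        rw [hXrec (n+1), hzeq]
        have : ((s : ℂ) * X (n+1) - (c (n+1) : ℂ)).re = s * (X (n+1)).re - c (n+1) := by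
          simp [Complex.mul_re]
        rw [this]
        have h1 : s * (X (n+1)).re ≤ s * (-s ^ n) := mul_le_mul_of_nonneg_left ih hs.le
        have h2 : s * (-s ^ n) = -s ^ (n+1) := by ring
        have := hcnn (n+1)
        linarith
    have hlow : ∀ n, s ^ n ≤ ‖X (n+1)‖ := by
      intro n
      have h1 := hre n
      have h2 : s ^ n ≤ -((X (n+1)).re) := by linarith
      calc s ^ n ≤ -((X (n+1)).re) := h2
        _ ≤ |(X (n+1)).re| := neg_le_abs _
        _ ≤ ‖X (n+1)‖ := Complex.abs_re_le_norm _
    -- contradiction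
    have hq : t / s < 1 := (div_lt_one hs).mpr hts
    have hq0 : 0 ≤ t / s := by positivity
    have htend : Tendsto (fun n : ℕ => (t/s)^n) atTop (nhds 0) :=
      tendsto_pow_atTop_nhds_zero_of_lt_one hq0 hq
    have hev2 : ∀ᶠ n : ℕ in atTop, ((K:ℝ) * ‖y‖ * t + 1) * (t/s)^n < 1 := by
      have : Tendsto (fun n : ℕ => ((K:ℝ) * ‖y‖ * t + 1) * (t/s)^n) atTop (nhds 0) := by
        simpa using htend.const_mul ((K:ℝ) * ‖y‖ * t + 1)
      exact this.eventually_lt_const one_pos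

    obtain ⟨m1, hm1⟩ := eventually_atTop.mp hdecay
    obtain ⟨m2, hm2⟩ := eventually_atTop.mp hev2
    set n := max m1 m2
    have hd1 : ‖Nc ^ (n+1)‖ ≤ t ^ (n+1) := hm1 _ (le_trans (le_max_left _ _) (Nat.le_succ_of_le le_rfl))
    have hd2 : ((K:ℝ) * ‖y‖ * t + 1) * (t/s)^n < 1 := hm2 _ (le_max_right _ _)
    have e1 : s ^ n ≤ (K:ℝ) * (t ^ (n+1) * ‖y‖) := by
      calc s ^ n ≤ ‖X (n+1)‖ := hlow n
        _ ≤ (K:ℝ) * (‖Nc ^ (n+1)‖ * ‖y‖) := hXbound (n+1)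
        _ ≤ (K:ℝ) * (t ^ (n+1) * ‖y‖) := by gcongr
    have htn : (t/s)^n * s^n = t^n := by
      rw [div_pow]; exact div_mul_cancel₀ _ (pow_ne_zero n (ne_of_gt hs))
    have hpows : (0:ℝ) < s ^ n := pow_pos hs n
    have hK0 : (0:ℝ) ≤ (K:ℝ) := Nat.cast_nonneg K
    have e2 : (K:ℝ) * (t ^ (n+1) * ‖y‖) = ((K:ℝ) * ‖y‖ * t) * t ^ n := by ring
    rw [e2] at e1
    have g2 : ((K:ℝ) * ‖y‖ * t) * t ^ n ≤ ((K:ℝ) * ‖y‖ * t + 1) * t ^ n :=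
      mul_le_mul_of_nonneg_right (by linarith) (pow_nonneg ht0 n)
    have g3 : ((K:ℝ) * ‖y‖ * t + 1) * t ^ n < s ^ n := by
      calc ((K:ℝ) * ‖y‖ * t + 1) * t ^ n
          = (((K:ℝ) * ‖y‖ * t + 1) * (t/s)^n) * s^n := by rw [← htn]; ring
        _ < 1 * s ^ n := mul_lt_mul_of_pos_right hd2 hpows
        _ = s ^ n := one_mul _
    linarith

  · -- case s < ‖z‖
    set U : ℕ → ℂ := fun n => (z - (s:ℂ)) * X (n+1) + z^(n+1) - ((s * c n : ℝ) : ℂ)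
      with hU
    have hU0 : U 0 = 0 := by
      simp only [hU, hX1, hc0]
      push_cast
      ring
    have hUrec : ∀ n, U (n+1) = z * U n + z * ((s * c n - c (n+1) : ℝ) : ℂ) := by
      intro n
      simp only [hU, hXrec (n+1)]
      push_cast
      ring
    have hUb : ∀ n, ‖U n‖ + s * c n ≤ s * ‖z‖ ^ n := by
      intro n
      induction n with
      | zero => simp [hU0, hc0]
      | succ n ih =>
        have hd : (0:ℝ) ≤ s * c n - c (n+1) := by linarith [hcs n]
        have h1 : ‖U (n+1)‖ ≤ ‖z‖ * ‖U n‖ + ‖z‖ * (s * c n - c (n+1)) := by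
          rw [hUrec n]
          calc ‖z * U n + z * ((s * c n - c (n+1) : ℝ) : ℂ)‖
              ≤ ‖z * U n‖ + ‖z * ((s * c n - c (n+1) : ℝ) : ℂ)‖ := norm_add_le _ _
            _ = ‖z‖ * ‖U n‖ + ‖z‖ * (s * c n - c (n+1)) := by
                rw [norm_mul, norm_mul, Complex.norm_real, Real.norm_of_nonneg hd]
        have hz0 : (0:ℝ) ≤ ‖z‖ := norm_nonneg z
        have hcn1 : 0 ≤ c (n+1) := hcnn (n+1)
        have h2 : ‖z‖ * (‖U n‖ + s * c n) ≤ ‖z‖ * (s * ‖z‖ ^ n) :=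
          mul_le_mul_of_nonneg_left ih hz0
        have hzs' : s ≤ ‖z‖ := hzabs
        have h1' : ‖z‖ * (s * c n - c (n+1)) = ‖z‖ * (s * c n) - ‖z‖ * c (n+1) := by ring
        calc ‖U (n+1)‖ + s * c (n+1)
            ≤ ‖z‖ * ‖U n‖ + ‖z‖ * (s * c n) - ‖z‖ * c (n+1) + s * c (n+1) := by linarith
          _ ≤ ‖z‖ * (s * ‖z‖ ^ n) - c (n+1) * (‖z‖ - s) := by
              have h2' : ‖z‖ * (‖U n‖ + s * c n) = ‖z‖ * ‖U n‖ + ‖z‖ * (s * c n) := by ring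
              have hexp : c (n+1) * (‖z‖ - s) = ‖z‖ * c (n+1) - s * c (n+1) := by ring
              linarith
          _ ≤ s * ‖z‖ ^ (n+1) := by
              have hnn : 0 ≤ c (n+1) * (‖z‖ - s) := mul_nonneg hcn1 (by linarith)
              have hr : ‖z‖ * (s * ‖z‖ ^ n) = s * ‖z‖ ^ (n+1) := by ring
              linarith
    have hlow2 : ∀ n, ‖z‖ ^ (n+1) - s * ‖z‖ ^ n ≤ ‖z - (s:ℂ)‖ * ‖X (n+1)‖ := by
      intro n
      have hid : z ^ (n+1) = (U n + ((s * c n : ℝ) : ℂ)) - (z - (s:ℂ)) * X (n+1) := by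
        simp only [hU]; ring
      have h1 : ‖z‖ ^ (n+1) ≤ (‖U n‖ + s * c n) + ‖z - (s:ℂ)‖ * ‖X (n+1)‖ := by
        calc ‖z‖ ^ (n+1) = ‖z ^ (n+1)‖ := (norm_pow z (n+1)).symm
          _ ≤ ‖U n + ((s * c n : ℝ) : ℂ)‖ + ‖(z - (s:ℂ)) * X (n+1)‖ := by
              rw [hid]; exact norm_sub_le _ _
          _ ≤ (‖U n‖ + ‖((s * c n : ℝ) : ℂ)‖) + ‖z - (s:ℂ)‖ * ‖X (n+1)‖ := by
              rw [norm_mul]; gcongr; exact norm_add_le _ _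
          _ = (‖U n‖ + s * c n) + ‖z - (s:ℂ)‖ * ‖X (n+1)‖ := by
              rw [Complex.norm_real, Real.norm_of_nonneg (mul_nonneg hs.le (hcnn n))]
      linarith [hUb n]
    -- endgame
    have hzpos : (0:ℝ) < ‖z‖ := lt_trans hs hzs
    have hq : t / ‖z‖ < 1 := (div_lt_one hzpos).mpr (lt_trans hts hzs)
    have hq0 : 0 ≤ t / ‖z‖ := by positivity
    set C : ℝ := ‖z - (s:ℂ)‖ * ((K:ℝ) * ‖y‖) * t + 1 with hC
    have hC0 : (0:ℝ) < C := by positivity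
    have htend : Tendsto (fun n : ℕ => C * (t/‖z‖)^n) atTop (nhds 0) := by
      simpa using (tendsto_pow_atTop_nhds_zero_of_lt_one hq0 hq).const_mul C
    have hev2 : ∀ᶠ n : ℕ in atTop, C * (t/‖z‖)^n < ‖z‖ - s :=
      htend.eventually_lt_const (by linarith)
    obtain ⟨m1, hm1⟩ := eventually_atTop.mp hdecay
    obtain ⟨m2, hm2⟩ := eventually_atTop.mp hev2
    set n := max m1 m2
    have hd1 : ‖Nc ^ (n+1)‖ ≤ t ^ (n+1) :=
      hm1 _ (le_trans (le_max_left _ _) (Nat.le_succ_of_le le_rfl))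
    have hd2 : C * (t/‖z‖)^n < ‖z‖ - s := hm2 _ (le_max_right _ _)
    have e1 : ‖z‖ ^ (n+1) - s * ‖z‖ ^ n ≤ ‖z - (s:ℂ)‖ * ((K:ℝ) * (t ^ (n+1) * ‖y‖)) := by
      calc ‖z‖ ^ (n+1) - s * ‖z‖ ^ n ≤ ‖z - (s:ℂ)‖ * ‖X (n+1)‖ := hlow2 n
        _ ≤ ‖z - (s:ℂ)‖ * ((K:ℝ) * (‖Nc ^ (n+1)‖ * ‖y‖)) :=
            mul_le_mul_of_nonneg_left (hXbound (n+1)) (norm_nonneg _)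
        _ ≤ ‖z - (s:ℂ)‖ * ((K:ℝ) * (t ^ (n+1) * ‖y‖)) := by gcongr
    have htn : (t/‖z‖)^n * ‖z‖^n = t^n := by
      rw [div_pow]; exact div_mul_cancel₀ _ (pow_ne_zero n (ne_of_gt hzpos))
    have hpows : (0:ℝ) < ‖z‖ ^ n := pow_pos hzpos n
    have e2 : ‖z - (s:ℂ)‖ * ((K:ℝ) * (t ^ (n+1) * ‖y‖)) = (C - 1) * t ^ n := by
      simp only [hC]; ring
    rw [e2] at e1
    have e3 : ‖z‖ ^ (n+1) - s * ‖z‖ ^ n = (‖z‖ - s) * ‖z‖ ^ n := by ring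
    rw [e3] at e1
    have g2 : (C - 1) * t ^ n ≤ C * t ^ n :=
      mul_le_mul_of_nonneg_right (by linarith) (pow_nonneg ht0 n)
    have g3 : C * t ^ n < (‖z‖ - s) * ‖z‖ ^ n := by
      calc C * t ^ n = (C * (t/‖z‖)^n) * ‖z‖^n := by rw [← htn]; ring
        _ < (‖z‖ - s) * ‖z‖ ^ n := mul_lt_mul_of_pos_right hd2 hpows
    linarith


/-- Let `R` be a nonsingular M-matrix with `e'R ≥ 0'`, `p` a nonnegative probability
vector, and `α > 0`. Then all eigenvalues of `−R(I − pe') − αpe'` have strictly negative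
real part. -/
theorem abandonment_matrix_hurwitz {K : ℕ} (R N : Matrix (Fin K) (Fin K) ℝ) (s : ℝ)
    (hs : 0 < s) (hN : ∀ i j, 0 ≤ N i j)
    (hR : R = s • (1 : Matrix (Fin K) (Fin K) ℝ) - N)
    (hρ : ∀ μ ∈ spectrum ℂ (N.map (Complex.ofReal)), ‖μ‖ < s)
    (heR : ∀ j, 0 ≤ ∑ i, R i j)
    (p : Fin K → ℝ) (hp : ∀ i, 0 ≤ p i) (hp1 : ∑ i, p i = 1)
    (α : ℝ) (hα : 0 < α) :
    ∀ μ ∈ spectrum ℂ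
      ((-(R * ((1:Matrix (Fin K) (Fin K) ℝ) - Matrix.vecMulVec p (fun _ => (1:ℝ))))
          - α • Matrix.vecMulVec p (fun _ => (1:ℝ))).map (Complex.ofReal)),
      μ.re < 0 := by
  intro μ hμ
  have hK : K ≠ 0 := by
    intro h
    subst h
    simp at hp1
  by_contra hre
  push_neg at hre
  -- notation
  set Nc : Matrix (Fin K) (Fin K) ℂ := N.map Complex.ofReal with hNcdef
  set Rc : Matrix (Fin K) (Fin K) ℂ := R.map Complex.ofReal with hRcdef
  set pc : Fin K → ℂ := fun i => (p i : ℂ) with hpcdef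
  set P : Matrix (Fin K) (Fin K) ℂ := vecMulVec pc (fun _ => (1:ℂ)) with hPdef
  set z : ℂ := μ + s with hzdef
  set Mc : Matrix (Fin K) (Fin K) ℂ :=
    (-(R * ((1:Matrix (Fin K) (Fin K) ℝ) - Matrix.vecMulVec p (fun _ => (1:ℝ))))
      - α • Matrix.vecMulVec p (fun _ => (1:ℝ))).map Complex.ofReal with hMcdef
  have hcol : ∀ j, ∑ i, N i j ≤ s := by
    intro j
    have h := heR j
    rw [hR] at h
    simp only [Matrix.sub_apply, Matrix.smul_apply, Matrix.one_apply, smul_eq_mul,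
      Finset.sum_sub_distrib, mul_ite, mul_one, mul_zero, Finset.sum_ite_eq',
      Finset.mem_univ, if_true] at h
    linarith
  -- Mc in complex form
  have hMc : Mc = -(Rc * (1 - P)) - (α:ℂ) • P := by
    rw [hMcdef]
    ext i j
    simp only [Matrix.map_apply, Matrix.sub_apply, Matrix.neg_apply, Matrix.smul_apply,
      Matrix.mul_apply, Matrix.one_apply, vecMulVec_apply, hPdef, hRcdef, hpcdef,
      smul_eq_mul, mul_one]
    push_cast
    congr 1
    congr 1
    refine Finset.sum_congr rfl fun k _ => ?_
    split <;> push_cast <;> ring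
  -- eigenvector
  have hnu : ¬IsUnit (μ • (1:Matrix (Fin K) (Fin K) ℂ) - Mc) := by
    rw [spectrum.mem_iff, Algebra.algebraMap_eq_smul_one] at hμ
    exact hμ
  have hdet : (μ • (1:Matrix (Fin K) (Fin K) ℂ) - Mc).det = 0 := by
    by_contra hd
    exact hnu ((Matrix.isUnit_iff_isUnit_det _).mpr (isUnit_iff_ne_zero.mpr hd))
  obtain ⟨v, hv0, hv⟩ := (Matrix.exists_mulVec_eq_zero_iff).mpr hdet
  have heig : Mc *ᵥ v = μ • v := by
    rw [sub_mulVec, smul_mulVec, one_mulVec] at hv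
    exact (sub_eq_zero.mp hv).symm
  set cv : ℂ := ∑ j, v j with hcvdef
  have hPv : P *ᵥ v = cv • pc := by
    funext i
    simp only [hPdef, mulVec, dotProduct, vecMulVec_apply, Pi.smul_apply, smul_eq_mul,
      hcvdef, one_mul]
    rw [Finset.sum_mul]
    refine Finset.sum_congr rfl fun j _ => ?_
    ring
  have hRc : Rc = (s:ℂ) • (1:Matrix (Fin K) (Fin K) ℂ) - Nc := by
    rw [hRcdef, hR]
    ext i j
    simp only [Matrix.map_apply, Matrix.sub_apply, Matrix.smul_apply, Matrix.one_apply,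
      smul_eq_mul, hNcdef]
    push_cast [apply_ite Complex.ofReal]
    split <;> simp
  set A : Matrix (Fin K) (Fin K) ℂ := z • 1 - Nc with hAdef
  have hRcw : ∀ w : Fin K → ℂ, Rc *ᵥ w = A *ᵥ w - μ • w := by
    intro w
    rw [hRc, hAdef, sub_mulVec, sub_mulVec, smul_mulVec, smul_mulVec, one_mulVec]
    funext i
    simp only [Pi.sub_apply, Pi.smul_apply, smul_eq_mul, hzdef]
    ring
  -- main equation : A *ᵥ (v - cv • pc) = -((μ + α) * cv) • pc
  have hmain : A *ᵥ (v - cv • pc) = (-((μ + α) * cv)) • pc := by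
    have h1 : Mc *ᵥ v = -(Rc *ᵥ (v - cv • pc)) - ((α:ℂ) * cv) • pc := by
      rw [hMc]
      rw [sub_mulVec, neg_mulVec, ← mulVec_mulVec, sub_mulVec, one_mulVec, hPv,
        smul_mulVec, hPv]
      funext i
      simp only [Pi.sub_apply, Pi.neg_apply, Pi.smul_apply, smul_eq_mul]
      ring
    rw [h1, hRcw] at heig
    -- heig : -(A *ᵥ (v - cv•pc) - μ • (v - cv•pc)) - (α*cv)•pc = μ • v
    funext i
    have h2 := congrFun heig i
    simp only [Pi.sub_apply, Pi.neg_apply, Pi.smul_apply, smul_eq_mul] at h2 ⊢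
    linear_combination -h2
  by_cases hA : IsUnit A
  · have hdetA : IsUnit A.det := (Matrix.isUnit_iff_isUnit_det A).mp hA
    set y : Fin K → ℂ := A⁻¹ *ᵥ pc with hydef
    have hAy : A *ᵥ y = pc := by
      rw [hydef, mulVec_mulVec, Matrix.mul_nonsing_inv _ hdetA, one_mulVec]
    have hvform : v - cv • pc + ((μ + α) * cv) • y = 0 := by
      have hk : A *ᵥ (v - cv • pc + ((μ + α) * cv) • y) = 0 := by
        rw [mulVec_add, hmain, mulVec_smul, hAy]
        funext i
        simp only [Pi.add_apply, Pi.smul_apply, Pi.zero_apply, smul_eq_mul]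
        ring
      have := congrArg (fun w => A⁻¹ *ᵥ w) hk
      simpa [mulVec_mulVec, Matrix.nonsing_inv_mul _ hdetA, one_mulVec, mulVec_zero]
        using this
    have hsumpc : ∑ i, pc i = 1 := by
      rw [hpcdef]
      push_cast
      exact_mod_cast congrArg (Complex.ofReal) hp1
    have hsumv : cv - cv * 1 + ((μ + α) * cv) * (∑ i, y i) = 0 := by
      have h5 := congrArg (fun w => ∑ i, w i) hvform
      simp only [Pi.add_apply, Pi.sub_apply, Pi.smul_apply, Pi.zero_apply, smul_eq_mul,
        Finset.sum_add_distrib, Finset.sum_sub_distrib, Finset.sum_const_zero] at h5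
      rw [← Finset.mul_sum, ← Finset.mul_sum, hsumpc, ← hcvdef] at h5
      exact h5
    have hcv : cv ≠ 0 := by
      intro h
      apply hv0
      have : v = cv • pc - ((μ + α) * cv) • y := by
        funext i
        have := congrFun hvform i
        simp only [Pi.add_apply, Pi.sub_apply, Pi.smul_apply, Pi.zero_apply,
          smul_eq_mul] at this ⊢
        linear_combination this
      rw [this, h]
      funext i
      simp
    have hzero : (μ + α) * (∑ i, y i) = 0 := by
      have h3 : ((μ + α) * cv) * (∑ i, y i) = 0 := by linear_combination hsumv
      have h4 : cv * ((μ + α) * (∑ i, y i)) = 0 := by linear_combination h3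
      rcases mul_eq_zero.mp h4 with h | h
      · exact absurd h hcv
      · exact h
    rcases mul_eq_zero.mp hzero with h | hsumy
    · have : μ.re + α = 0 := by
        have := congrArg Complex.re h
        simpa using this
      linarith
    · refine amh_key hK N s hs hN hcol p hp hp1 hρ z ?_ y ?_ hsumy
      · rw [hzdef]
        simp only [Complex.add_re, Complex.ofReal_re]
        linarith
      · rw [← hAdef, hAy, hpcdef]
  · exfalso
    have hmem : z ∈ spectrum ℂ Nc := by
      rw [spectrum.mem_iff, Algebra.algebraMap_eq_smul_one]
      exact hA
    have h1 : ‖z‖ < s := hρ z hmem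
    have h2 : z.re ≤ ‖z‖ := Complex.re_le_norm z
    have h3 : s ≤ z.re := by
      rw [hzdef]
      simp only [Complex.add_re, Complex.ofReal_re]
      linarith
    linarith
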